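/- For b = 2 and Λ = (2) (so ρ = 1, λ = 2), writing T = (t₁,t₂) and Z = (z₁,z₂), the recurrence of Theorem 4.3 specializes to Ω(2n; z₁,z₂) = Ω(n; z₁^{t₁}, z₂^{t₂}) + z₂·Ω(n-1; z₁^{t₁}, z₂^{t₂}) and Ω(2n+1; z₁,z₂) = z₁·Ω(n; z₁^{t₁}, z₂^{t₂}), combined appropriately; consequently Ω_{2,T}^{(2)}(n; z₁,z₂) = ω_{t₁,t₂}(n+1; z₁,z₂) for all n ≥ 0, where ω is the 2-parameter generalized Stern polynomial. -/

import Mathlib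

open MvPolynomial

/-- Substitution `z₁ ↦ z₁^{t₁}`, `z₂ ↦ z₂^{t₂}` in `ℤ[z₁, z₂]`, where `z₁ = X 0` and
`z₂ = X 1`. -/
noncomputable def substT (t₁ t₂ : ℕ) (p : MvPolynomial (Fin 2) ℤ) :
    MvPolynomial (Fin 2) ℤ :=
  aeval (fun i : Fin 2 => (X i : MvPolynomial (Fin 2) ℤ) ^ (if i = 0 then t₁ else t₂)) p

lemma substT_add (t₁ t₂ : ℕ) (p q : MvPolynomial (Fin 2) ℤ) :
    substT t₁ t₂ (p + q) = substT t₁ t₂ p + substT t₁ t₂ q := map_add _ p q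

lemma substT_mul (t₁ t₂ : ℕ) (p q : MvPolynomial (Fin 2) ℤ) :
    substT t₁ t₂ (p * q) = substT t₁ t₂ p * substT t₁ t₂ q := map_mul _ p q

lemma substT_zero (t₁ t₂ : ℕ) : substT t₁ t₂ 0 = 0 := map_zero _

lemma substT_one (t₁ t₂ : ℕ) : substT t₁ t₂ 1 = 1 := map_one _

lemma substT_X0_pow (t₁ t₂ e : ℕ) :
    substT t₁ t₂ ((X 0 : MvPolynomial (Fin 2) ℤ) ^ e) = X 0 ^ (t₁ * e) := by
  simp [substT, ← pow_mul]

lemma substT_X1_pow (t₁ t₂ e : ℕ) :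
    substT t₁ t₂ ((X 1 : MvPolynomial (Fin 2) ℤ) ^ e) = X 1 ^ (t₂ * e) := by
  simp [substT, ← pow_mul]

private lemma coeff_mul_factor {R : Type*} [CommRing R] (F : PowerSeries R) (a b : R)
    (k l m : ℕ) :
    (PowerSeries.coeff (R := R) m)
        (F * (1 + PowerSeries.C (R := R) a * PowerSeries.X ^ k +
          PowerSeries.C (R := R) b * PowerSeries.X ^ l)) =
      PowerSeries.coeff (R := R) m F
        + a * (if k ≤ m then PowerSeries.coeff (R := R) (m - k) F else 0)
        + b * (if l ≤ m then PowerSeries.coeff (R := R) (m - l) F else 0) := by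
  have h1 : ∀ (c : R) (d : ℕ), PowerSeries.coeff (R := R) m (F * (PowerSeries.C (R := R) c * PowerSeries.X ^ d))
      = c * (if d ≤ m then PowerSeries.coeff (R := R) (m - d) F else 0) := by
    intro c d
    rw [show F * (PowerSeries.C (R := R) c * PowerSeries.X ^ d)
        = PowerSeries.C (R := R) c * (F * PowerSeries.X ^ d) by ring,
      PowerSeries.coeff_C_mul, PowerSeries.coeff_mul_X_pow']
  rw [mul_add, mul_add, mul_one, map_add, map_add, h1, h1]

noncomputable def ff (t₁ t₂ j : ℕ) : PowerSeries (MvPolynomial (Fin 2) ℤ) :=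
  1 + PowerSeries.C (R := MvPolynomial (Fin 2) ℤ)
        ((X 0 : MvPolynomial (Fin 2) ℤ) ^ t₁ ^ j) * PowerSeries.X ^ 2 ^ j +
      PowerSeries.C (R := MvPolynomial (Fin 2) ℤ)
        ((X 1 : MvPolynomial (Fin 2) ℤ) ^ t₂ ^ j) * PowerSeries.X ^ 2 ^ (j + 1)

lemma shift_coeff (t₁ t₂ : ℕ) : ∀ N m : ℕ,
    PowerSeries.coeff m (∏ j ∈ Finset.range N, ff t₁ t₂ (j + 1)) =
      if m % 2 = 0 then
        substT t₁ t₂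
          (PowerSeries.coeff (m / 2) (∏ j ∈ Finset.range N, ff t₁ t₂ j))
      else 0 := by
  intro N
  induction N with
  | zero =>
    intro m
    simp only [Finset.range_zero, Finset.prod_empty, PowerSeries.coeff_one]
    by_cases h : m = 0
    · subst h; simp [substT_one]
    · rw [if_neg h]
      by_cases h2 : m % 2 = 0
      · rw [if_pos h2, if_neg (by omega), substT_zero]
      · rw [if_neg h2]
  | succ N ih =>
    intro m
    rw [Finset.prod_range_succ, Finset.prod_range_succ]
    rw [show ff t₁ t₂ (N + 1) = 1 + PowerSeries.C (R := MvPolynomial (Fin 2) ℤ)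
          ((X 0 : MvPolynomial (Fin 2) ℤ) ^ t₁ ^ (N+1)) * PowerSeries.X ^ 2 ^ (N+1) +
        PowerSeries.C (R := MvPolynomial (Fin 2) ℤ)
          ((X 1 : MvPolynomial (Fin 2) ℤ) ^ t₂ ^ (N+1)) * PowerSeries.X ^ 2 ^ (N+2) from rfl]
    rw [show ff t₁ t₂ N = 1 + PowerSeries.C (R := MvPolynomial (Fin 2) ℤ)
          ((X 0 : MvPolynomial (Fin 2) ℤ) ^ t₁ ^ N) * PowerSeries.X ^ 2 ^ N +
        PowerSeries.C (R := MvPolynomial (Fin 2) ℤ)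
          ((X 1 : MvPolynomial (Fin 2) ℤ) ^ t₂ ^ N) * PowerSeries.X ^ 2 ^ (N+1) from rfl]
    rw [coeff_mul_factor, coeff_mul_factor, ih m, ih (m - 2 ^ (N+1)), ih (m - 2 ^ (N+2))]
    have hk1 : (2:ℕ) ^ (N+1) = 2 * 2 ^ N := by ring
    have hk2 : (2:ℕ) ^ (N+2) = 4 * 2 ^ N := by ring
    have ht1 : (X 0 : MvPolynomial (Fin 2) ℤ) ^ (t₁ * t₁ ^ N) = X 0 ^ t₁ ^ (N+1) := by
      rw [show t₁ * t₁ ^ N = t₁ ^ (N+1) by ring]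
    have ht2 : (X 1 : MvPolynomial (Fin 2) ℤ) ^ (t₂ * t₂ ^ N) = X 1 ^ t₂ ^ (N+1) := by
      rw [show t₂ * t₂ ^ N = t₂ ^ (N+1) by ring]
    by_cases hm : m % 2 = 0
    · rw [if_pos hm, if_pos hm]
      by_cases h1 : 2 ^ N ≤ m / 2
      · rw [if_pos h1, if_pos (show 2 ^ (N+1) ≤ m by omega),
          if_pos (show (m - 2 ^ (N+1)) % 2 = 0 by omega),
          show (m - 2 ^ (N+1)) / 2 = m / 2 - 2 ^ N by omega]
        by_cases h2 : 2 ^ (N+1) ≤ m / 2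
        · rw [if_pos h2, if_pos (show 2 ^ (N+2) ≤ m by omega),
            if_pos (show (m - 2 ^ (N+2)) % 2 = 0 by omega),
            show (m - 2 ^ (N+2)) / 2 = m / 2 - 2 ^ (N+1) by omega]
          simp only [substT_add, substT_mul, substT_zero, substT_X0_pow, substT_X1_pow,
            ht1, ht2, mul_zero, add_zero]
        · rw [if_neg h2, if_neg (show ¬ 2 ^ (N+2) ≤ m by omega)]
          simp only [substT_add, substT_mul, substT_zero, substT_X0_pow, substT_X1_pow,
            ht1, ht2, mul_zero, add_zero]
          try ring
      · rw [if_neg h1, if_neg (show ¬ 2 ^ (N+1) ≤ m by omega),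
          if_neg (show ¬ 2 ^ (N+1) ≤ m / 2 by omega),
          if_neg (show ¬ 2 ^ (N+2) ≤ m by omega)]
        simp only [substT_add, substT_mul, substT_zero, substT_X0_pow, substT_X1_pow,
          ht1, ht2, mul_zero, add_zero]
        try ring
    · rw [if_neg hm, if_neg hm]
      have e1 : (if 2 ^ (N+1) ≤ m then
          (if (m - 2 ^ (N+1)) % 2 = 0 then
            substT t₁ t₂ ((PowerSeries.coeff ((m - 2 ^ (N+1)) / 2))
              (∏ j ∈ Finset.range N, ff t₁ t₂ j)) else 0) else 0)
          = (0 : MvPolynomial (Fin 2) ℤ) := by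
        by_cases h : 2 ^ (N+1) ≤ m
        · rw [if_pos h, if_neg (by omega)]
        · rw [if_neg h]
      have e2 : (if 2 ^ (N+2) ≤ m then
          (if (m - 2 ^ (N+2)) % 2 = 0 then
            substT t₁ t₂ ((PowerSeries.coeff ((m - 2 ^ (N+2)) / 2))
              (∏ j ∈ Finset.range N, ff t₁ t₂ j)) else 0) else 0)
          = (0 : MvPolynomial (Fin 2) ℤ) := by
        by_cases h : 2 ^ (N+2) ≤ m
        · rw [if_pos h, if_neg (by omega)]
        · rw [if_neg h]
      rw [e1, e2]
      ring

lemma coeff_succ_odd (t₁ t₂ N n : ℕ) :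
    PowerSeries.coeff (2 * n + 1) (∏ j ∈ Finset.range (N + 1), ff t₁ t₂ j) =
      X 0 * substT t₁ t₂
        (PowerSeries.coeff n (∏ j ∈ Finset.range N, ff t₁ t₂ j)) := by
  rw [Finset.prod_range_succ']
  rw [show ff t₁ t₂ 0 = 1 + PowerSeries.C (R := MvPolynomial (Fin 2) ℤ)
        ((X 0 : MvPolynomial (Fin 2) ℤ) ^ t₁ ^ 0) * PowerSeries.X ^ 2 ^ 0 +
      PowerSeries.C (R := MvPolynomial (Fin 2) ℤ)
        ((X 1 : MvPolynomial (Fin 2) ℤ) ^ t₂ ^ 0) * PowerSeries.X ^ 2 ^ 1 from rfl]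
  rw [coeff_mul_factor, shift_coeff, shift_coeff, shift_coeff]
  rw [if_neg (by omega), if_pos (by omega), if_pos (by omega),
    show (2 * n + 1 - 2 ^ 0) / 2 = n by omega]
  by_cases h : 2 ^ 1 ≤ 2 * n + 1
  · rw [if_pos h, if_neg (by omega)]
    simp
  · rw [if_neg h]
    simp

lemma coeff_succ_even (t₁ t₂ N n : ℕ) (hn : 1 ≤ n) :
    PowerSeries.coeff (2 * n) (∏ j ∈ Finset.range (N + 1), ff t₁ t₂ j) =
      substT t₁ t₂ (PowerSeries.coeff n (∏ j ∈ Finset.range N, ff t₁ t₂ j)) +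
      X 1 * substT t₁ t₂
        (PowerSeries.coeff (n - 1) (∏ j ∈ Finset.range N, ff t₁ t₂ j)) := by
  rw [Finset.prod_range_succ']
  rw [show ff t₁ t₂ 0 = 1 + PowerSeries.C (R := MvPolynomial (Fin 2) ℤ)
        ((X 0 : MvPolynomial (Fin 2) ℤ) ^ t₁ ^ 0) * PowerSeries.X ^ 2 ^ 0 +
      PowerSeries.C (R := MvPolynomial (Fin 2) ℤ)
        ((X 1 : MvPolynomial (Fin 2) ℤ) ^ t₂ ^ 0) * PowerSeries.X ^ 2 ^ 1 from rfl]
  rw [coeff_mul_factor, shift_coeff, shift_coeff, shift_coeff]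
  rw [if_pos (by omega), show 2 * n / 2 = n by omega,
    if_pos (show (2:ℕ) ^ 0 ≤ 2 * n by omega), if_neg (by omega),
    if_pos (show (2:ℕ) ^ 1 ≤ 2 * n by omega), if_pos (by omega),
    show (2 * n - 2 ^ 1) / 2 = n - 1 by omega]
  simp

lemma coeff_zero_A (t₁ t₂ N : ℕ) :
    PowerSeries.coeff 0 (∏ j ∈ Finset.range N, ff t₁ t₂ j) = 1 := by
  induction N with
  | zero => simp
  | succ N ih =>
    rw [Finset.prod_range_succ]
    rw [show ff t₁ t₂ N = 1 + PowerSeries.C (R := MvPolynomial (Fin 2) ℤ)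
          ((X 0 : MvPolynomial (Fin 2) ℤ) ^ t₁ ^ N) * PowerSeries.X ^ 2 ^ N +
        PowerSeries.C (R := MvPolynomial (Fin 2) ℤ)
          ((X 1 : MvPolynomial (Fin 2) ℤ) ^ t₂ ^ N) * PowerSeries.X ^ 2 ^ (N + 1) from rfl]
    rw [coeff_mul_factor, ih, if_neg (by simp), if_neg (by simp)]
    simp

/-- For `b = 2`, `Λ = (2)`, the polynomials `Ω_{2,T}^{(2)}(n; z₁, z₂)` characterized by
`∑_{n≥0} Ω(n; Z) q^n = ∏_{j≥0} (1 + z₁^{t₁^j} q^{2^j} + z₂^{t₂^j} q^{2^{j+1}})`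
(rendered coefficientwise via stabilized partial products) satisfy the specialized
recurrences `Ω(2n; z₁, z₂) = Ω(n; z₁^{t₁}, z₂^{t₂}) + z₂ Ω(n-1; z₁^{t₁}, z₂^{t₂})`
(for `n ≥ 1`) and `Ω(2n+1; z₁, z₂) = z₁ Ω(n; z₁^{t₁}, z₂^{t₂})`; consequently
`Ω_{2,T}^{(2)}(n; z₁, z₂) = ω_{t₁,t₂}(n+1; z₁, z₂)` for all `n ≥ 0`, where `ω` is the
2-parameter generalized Stern polynomial. -/
theorem Omega_two_eq_stern (t₁ t₂ : ℕ) (ht₁ : 1 ≤ t₁) (ht₂ : 1 ≤ t₂)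
    (Om : ℕ → MvPolynomial (Fin 2) ℤ)
    (hOm : ∀ n N : ℕ, n < 2 ^ N →
      PowerSeries.coeff (R := MvPolynomial (Fin 2) ℤ) n
        (∏ j ∈ Finset.range N,
          (1 + PowerSeries.C (R := MvPolynomial (Fin 2) ℤ)
                ((X 0 : MvPolynomial (Fin 2) ℤ) ^ t₁ ^ j) * PowerSeries.X ^ 2 ^ j +
              PowerSeries.C (R := MvPolynomial (Fin 2) ℤ)
                ((X 1 : MvPolynomial (Fin 2) ℤ) ^ t₂ ^ j) * PowerSeries.X ^ 2 ^ (j + 1)))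
        = Om n)
    (w : ℕ → MvPolynomial (Fin 2) ℤ)
    (hw0 : w 0 = 0) (hw1 : w 1 = 1)
    (hweven : ∀ n, 1 ≤ n → w (2 * n) = X 0 * substT t₁ t₂ (w n))
    (hwodd : ∀ n, 1 ≤ n →
      w (2 * n + 1) = X 1 * substT t₁ t₂ (w n) + substT t₁ t₂ (w (n + 1))) :
    (∀ n : ℕ, 1 ≤ n →
      Om (2 * n) = substT t₁ t₂ (Om n) + X 1 * substT t₁ t₂ (Om (n - 1))) ∧
    (∀ n : ℕ, Om (2 * n + 1) = X 0 * substT t₁ t₂ (Om n)) ∧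
    (∀ n : ℕ, Om n = w (n + 1)) := by
  have hOm' : ∀ n N : ℕ, n < 2 ^ N →
      PowerSeries.coeff n (∏ j ∈ Finset.range N, ff t₁ t₂ j) = Om n := hOm
  have hpow : ∀ n : ℕ, n < 2 ^ n := fun _ => Nat.lt_two_pow_self
  have heven : ∀ n : ℕ, 1 ≤ n →
      Om (2 * n) = substT t₁ t₂ (Om n) + X 1 * substT t₁ t₂ (Om (n - 1)) := by
    intro n hn
    have h1 : 2 * n < 2 ^ (n + 1) := by have := hpow n; rw [pow_succ]; omega
    rw [← hOm' (2 * n) (n + 1) h1, coeff_succ_even t₁ t₂ n n hn,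
      hOm' n n (hpow n), hOm' (n - 1) n (by have := hpow n; omega)]
  have hodd : ∀ n : ℕ, Om (2 * n + 1) = X 0 * substT t₁ t₂ (Om n) := by
    intro n
    have h1 : 2 * n + 1 < 2 ^ (n + 1) := by have := hpow n; rw [pow_succ]; omega
    rw [← hOm' (2 * n + 1) (n + 1) h1, coeff_succ_odd t₁ t₂ n n, hOm' n n (hpow n)]
  have h0 : Om 0 = 1 := by
    rw [← hOm' 0 0 (by norm_num), coeff_zero_A]
  refine ⟨heven, hodd, ?_⟩
  intro n
  induction n using Nat.strong_induction_on with
  | _ n ih =>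
    rcases Nat.even_or_odd n with ⟨c, hc⟩ | ⟨c, hc⟩
    · by_cases hc0 : c = 0
      · subst hc0
        simp only [hc]
        rw [h0, hw1]
      · have hn : n = 2 * c := by omega
        subst hn
        rw [heven c (by omega), ih c (by omega), ih (c - 1) (by omega),
          show c - 1 + 1 = c by omega, hwodd c (by omega)]
        ring
    · have hn : n = 2 * c + 1 := by omega
      subst hn
      rw [hodd c, ih c (by omega), show 2 * c + 1 + 1 = 2 * (c + 1) by omega,
        hweven (c + 1) (by omega)]
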